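/- Let V be a finite-dimensional ℂ-vector space and a ∈ GL(V) an invertible linear map such that a is conjugate (in GL(V)) to ζ·a, where ζ = e^{2πi/n} is a primitive n-th root of unity and n = dim V. Then a has n distinct eigenvalues; in particular every eigenspace of a is one-dimensional. -/

import Mathlib

open Module

lemma aux_sum_finrank_le {K V ι : Type*} [Field K] [AddCommGroup V] [Module K V]
    [FiniteDimensional K V] [DecidableEq ι] {p : ι → Submodule K V} (hp : iSupIndep p) (s : Finset ι) :
    ∑ i ∈ s, Module.finrank K (p i) ≤ Module.finrank K V := by
  have key : ∀ s : Finset ι, ∑ i ∈ s, Module.finrank K (p i)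
      = Module.finrank K (s.sup p : Submodule K V) := by
    intro s
    induction s using Finset.induction_on with
    | empty =>
      simp [finrank_bot]
      change 0 = finrank K (⊥ : Submodule K V)
      simp
    | insert _ _ ha ih =>
      rename_i a s
      rw [Finset.sum_insert ha, Finset.sup_insert, ih]
      have hdisj : Disjoint (p a) (s.sup p) := by
        refine (hp (i := a)).mono_right ?_
        refine Finset.sup_le fun j hj => ?_
        exact le_iSup₂ (f := fun j (_ : j ≠ a) => p j) j (fun h => ha (h ▸ hj))
      have := Submodule.finrank_sup_add_finrank_inf_eq (p a) (s.sup p)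
      rw [hdisj.eq_bot, finrank_bot, add_zero] at this
      omega
  rw [key]
  exact Submodule.finrank_le _

/-- if `a ∈ GL(V)` (with `V` a finite-dimensional complex vector space of
dimension `n ≥ 1`) is conjugate to `ζ·a` with `ζ = e^{2πi/n}`, then `a` has `n` distinct
eigenvalues, and every eigenspace of `a` is one-dimensional. -/
theorem stmt4 {V : Type*} [AddCommGroup V] [Module ℂ V] [FiniteDimensional ℂ V]
    (hn : 0 < Module.finrank ℂ V)
    (a : V ≃ₗ[ℂ] V)
    (hconj : ∃ g : V ≃ₗ[ℂ] V, ∀ v : V, g (a (g.symm v)) =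
      Complex.exp (2 * Real.pi * Complex.I / (Module.finrank ℂ V : ℂ)) • a v) :
    {μ : ℂ | Module.End.HasEigenvalue (a : V →ₗ[ℂ] V) μ}.ncard = Module.finrank ℂ V ∧
      ∀ μ : ℂ, Module.End.HasEigenvalue (a : V →ₗ[ℂ] V) μ →
        Module.finrank ℂ (Module.End.eigenspace (a : V →ₗ[ℂ] V) μ) = 1 := by
  classical
  set n := Module.finrank ℂ V with hndef
  set ζ : ℂ := Complex.exp (2 * Real.pi * Complex.I / n) with hζdef
  have hζ : IsPrimitiveRoot ζ n := Complex.isPrimitiveRoot_exp n hn.ne'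
  have hζ0 : ζ ≠ 0 := Complex.exp_ne_zero _
  obtain ⟨g, hg⟩ := hconj
  set f : Module.End ℂ V := (a : V →ₗ[ℂ] V) with hfdef
  have hfa : ∀ v : V, f v = a v := fun v => rfl
  -- the conjugation moves eigenspaces
  have hmap : ∀ μ : ℂ, (f.eigenspace μ).map (g : V →ₗ[ℂ] V) = f.eigenspace (ζ⁻¹ * μ) := by
    intro μ
    ext v
    rw [Submodule.mem_map_equiv, Module.End.mem_eigenspace_iff, Module.End.mem_eigenspace_iff]
    have hgv := hg v
    constructor
    · intro h
      rw [hfa] at h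
      have h2 : g (a (g.symm v)) = μ • v := by
        rw [h, map_smul, g.apply_symm_apply]
      rw [hgv] at h2
      rw [hfa, mul_smul, ← h2, inv_smul_smul₀ hζ0]
    · intro h
      rw [hfa] at h
      have h2 : ζ • a v = μ • v := by
        rw [h, smul_smul, mul_inv_cancel_left₀ hζ0]
      have h3 : g (a (g.symm v)) = μ • v := by rw [hgv, h2]
      have h4 : a (g.symm v) = g.symm (μ • v) := by
        rw [← h3, g.symm_apply_apply]
      rw [hfa, h4, map_smul]
  have hdim : ∀ μ : ℂ, Module.finrank ℂ (f.eigenspace (ζ⁻¹ * μ))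
      = Module.finrank ℂ (f.eigenspace μ) := by
    intro μ
    rw [← hmap μ]
    exact LinearEquiv.finrank_map_eq g _
  -- existence of an eigenvalue
  have : Nontrivial V := Module.nontrivial_of_finrank_pos hn
  obtain ⟨μ₀, hμ₀⟩ := Module.End.exists_eigenvalue f
  have hμ₀0 : μ₀ ≠ 0 := by
    intro h
    obtain ⟨v, hv⟩ := hμ₀.exists_hasEigenvector
    have : f v = 0 := by rw [hv.apply_eq_smul, h, zero_smul]
    exact hv.right (a.injective (by rw [← hfa, this, map_zero]))
  set ξ : ℂ := ζ⁻¹ with hξdef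
  have hξ : IsPrimitiveRoot ξ n := hζ.inv
  set d := Module.finrank ℂ (f.eigenspace μ₀) with hddef
  have hiter : ∀ k : ℕ, Module.finrank ℂ (f.eigenspace (ξ ^ k * μ₀)) = d := by
    intro k
    induction k with
    | zero => rw [pow_zero, one_mul]
    | succ k ih =>
      have h1 : ξ ^ (k + 1) * μ₀ = ζ⁻¹ * (ξ ^ k * μ₀) := by rw [hξdef]; ring
      rw [h1, hdim, ih]
  have hdpos : 0 < d := by
    rw [hddef]
    rcases Nat.eq_zero_or_pos (Module.finrank ℂ (f.eigenspace μ₀)) with h | h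
    · exact absurd (Submodule.finrank_eq_zero.mp h) (Module.End.hasEigenvalue_iff.mp hμ₀)
    · exact h
  -- the finset of the n known eigenvalues
  set T : Finset ℂ := (Finset.range n).image (fun k => ξ ^ k * μ₀) with hTdef
  have hTcard : T.card = n := by
    rw [hTdef, Finset.card_image_of_injOn, Finset.card_range]
    intro i hi j hj h
    exact hξ.pow_inj (Finset.mem_range.mp hi) (Finset.mem_range.mp hj)
      (mul_right_cancel₀ hμ₀0 h)
  have hTdim : ∀ μ ∈ T, Module.finrank ℂ (f.eigenspace μ) = d := by
    intro μ hμ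
    obtain ⟨k, _, rfl⟩ := Finset.mem_image.mp hμ
    exact hiter k
  have hTev : ∀ μ ∈ T, Module.End.HasEigenvalue f μ := by
    intro μ hμ
    rw [Module.End.hasEigenvalue_iff]
    intro hbot
    have := hTdim μ hμ
    rw [hbot, finrank_bot] at this
    omega
  have hp : iSupIndep f.eigenspace := Module.End.eigenspaces_iSupIndep f
  -- every eigenvalue is in T
  set S : Set ℂ := {μ : ℂ | Module.End.HasEigenvalue f μ} with hSdef
  have hST : S = ↑T := by
    apply Set.Subset.antisymm
    · intro μ hμ
      by_contra hμT
      have hμT' : μ ∉ T := hμT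
      have hsum := aux_sum_finrank_le hp (insert μ T)
      have hge : ∀ ν ∈ insert μ T, 1 ≤ Module.finrank ℂ (f.eigenspace ν) := by
        intro ν hν
        rcases Finset.mem_insert.mp hν with rfl | hν
        · rcases Nat.eq_zero_or_pos (Module.finrank ℂ (f.eigenspace ν)) with h | h
          · exact absurd (Submodule.finrank_eq_zero.mp h) (Module.End.hasEigenvalue_iff.mp hμ)
          · exact h
        · rw [hTdim ν hν]; exact hdpos
      have : (insert μ T).card ≤ ∑ ν ∈ insert μ T, Module.finrank ℂ (f.eigenspace ν) := by
        calc (insert μ T).card = ∑ _ν ∈ insert μ T, 1 := by simp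
          _ ≤ _ := Finset.sum_le_sum hge
      rw [Finset.card_insert_of_notMem hμT', hTcard] at this
      omega
    · intro μ hμ
      exact hTev μ hμ
  have hsumT := aux_sum_finrank_le hp T
  have hsumT' : ∑ ν ∈ T, Module.finrank ℂ (f.eigenspace ν) = n * d := by
    rw [Finset.sum_congr rfl hTdim, Finset.sum_const, hTcard, smul_eq_mul]
  have hd1 : d = 1 := by
    rw [hsumT'] at hsumT
    nlinarith
  constructor
  · rw [hST, Set.ncard_coe_finset, hTcard]
  · intro μ hμ
    have : μ ∈ S := hμ
    rw [hST] at this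
    rw [hTdim μ this]
    exact hd1
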